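/- Let (W,S) be a Coxeter system and let v, w ∈ W be such that ℓ(v⁻¹wv) = ℓ(w). Then w is straight if and only if v⁻¹wv is straight. -/

import Mathlib

open CoxeterSystem

variable {B W : Type*} [Group W] {M : CoxeterMatrix B}

/-- `w →ˢ w'`: one elementary conjugation by a simple reflection, not increasing length. -/
def ConjStep (cs : CoxeterSystem M W) (w w' : W) : Prop :=
  ∃ i : B, w' = cs.simple i * w * cs.simple i ∧ cs.length w' ≤ cs.length w

/-- `w → w'`: a finite chain of elementary conjugations. -/
def ConjMove (cs : CoxeterSystem M W) : W → W → Prop :=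
  Relation.ReflTransGen (ConjStep cs)

/-- `u` has minimal length in its conjugacy class. -/
def IsMinimalLength (cs : CoxeterSystem M W) (u : W) : Prop :=
  ∀ v : W, cs.length u ≤ cs.length (v⁻¹ * u * v)

/-- The standard parabolic subgroup `W_I`. -/
def StandardParabolic (cs : CoxeterSystem M W) (I : Set B) : Subgroup W :=
  Subgroup.closure (cs.simple '' I)

/-- `I` is spherical if `W_I` is finite. -/
def IsSpherical (cs : CoxeterSystem M W) (I : Set B) : Prop :=
  (StandardParabolic cs I : Set W).Finite

/-- `w ≈ˣ w'`: elementarily strongly conjugate via `x`. -/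
def ElemStrong (cs : CoxeterSystem M W) (x w w' : W) : Prop :=
  cs.length w = cs.length w' ∧ w' = x⁻¹ * w * x ∧
    (cs.length (x⁻¹ * w) = cs.length x + cs.length w ∨
     cs.length (w * x) = cs.length w + cs.length x)

/-- `w ∼ w'`: strongly conjugate. -/
def StrongConj (cs : CoxeterSystem M W) : W → W → Prop :=
  Relation.ReflTransGen (fun w w' => ∃ x : W, ElemStrong cs x w w')

/-- `w` and `w'` are elementarily tightly conjugate. -/
def ElemTight (cs : CoxeterSystem M W) (w w' : W) : Prop :=
  cs.length w = cs.length w' ∧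
    ((∃ i : B, w' = cs.simple i * w * cs.simple i) ∨
     (∃ I : Set B, IsSpherical cs I ∧ w ∈ Subgroup.normalizer (StandardParabolic cs I : Set W) ∧
       ∃ x ∈ StandardParabolic cs I, ElemStrong cs x w w'))

/-- `w ≈_t w'`: tightly conjugate. -/
def TightConj (cs : CoxeterSystem M W) : W → W → Prop :=
  Relation.ReflTransGen (ElemTight cs)

/-- `w` is elementarily related to `w'`: `w'` is a cyclic shift `s_k ⋯ s_d s_1 ⋯ s_{k-1}`
(`k ∈ {1, …, d}`) of some reduced decomposition `w = s_1 ⋯ s_d` of `w`. -/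
def ElemRelated (cs : CoxeterSystem M W) (w w' : W) : Prop :=
  ∃ ω : List B, cs.wordProd ω = w ∧ cs.IsReduced ω ∧
    ∃ k, 1 ≤ k ∧ k ≤ ω.length ∧ w' = cs.wordProd (ω.drop (k - 1) ++ ω.take (k - 1))

/-- `w ∼_κ w'`: related by a finite chain of cyclic shifts. -/
def KappaConj (cs : CoxeterSystem M W) : W → W → Prop :=
  Relation.ReflTransGen (ElemRelated cs)

/-- `w'` is a cyclic shift `s_{r+1} ⋯ s_d s_1 ⋯ s_r` (`r ∈ {1, …, d}`) of some reduced
decomposition `w = s_1 ⋯ s_d` of `w`. -/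
def CyclicShift (cs : CoxeterSystem M W) (w w' : W) : Prop :=
  ∃ ω : List B, cs.wordProd ω = w ∧ cs.IsReduced ω ∧
    ∃ r, 1 ≤ r ∧ r ≤ ω.length ∧ w' = cs.wordProd (ω.drop r ++ ω.take r)

/-- `w` is straight if `ℓ(wⁿ) = n ℓ(w)` for all `n : ℕ`. -/
def IsStraight (cs : CoxeterSystem M W) (w : W) : Prop :=
  ∀ n : ℕ, cs.length (w ^ n) = n * cs.length w

private lemma length_pow_le' (cs : CoxeterSystem M W) (u : W) (n : ℕ) :
    cs.length (u ^ n) ≤ n * cs.length u := by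
  induction n with
  | zero => simp
  | succ n ih =>
    calc cs.length (u ^ (n + 1)) = cs.length (u ^ n * u) := by rw [pow_succ]
      _ ≤ cs.length (u ^ n) + cs.length u := cs.length_mul_le _ _
      _ ≤ n * cs.length u + cs.length u := by omega
      _ = (n + 1) * cs.length u := by ring

private lemma straight_conj_aux (cs : CoxeterSystem M W) (v w : W)
    (h : cs.length (v⁻¹ * w * v) = cs.length w) (hw : IsStraight cs w) :
    IsStraight cs (v⁻¹ * w * v) := by
  set u := v⁻¹ * w * v with hu
  have hconj : ∀ n : ℕ, u ^ n = v⁻¹ * w ^ n * v := by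
    intro n
    have : u = v⁻¹ * w * (v⁻¹)⁻¹ := by rw [hu, inv_inv]
    rw [this, conj_pow, inv_inv]
  intro n
  have hub : cs.length (u ^ n) ≤ n * cs.length w := by
    have := length_pow_le' cs u n
    rwa [h] at this
  have hlb : ∀ m : ℕ, (n * m) * cs.length w ≤
      2 * cs.length v + m * cs.length (u ^ n) := by
    intro m
    have hw' : w ^ (n * m) = v * (u ^ n) ^ m * v⁻¹ := by
      rw [← pow_mul, hconj]
      group
    calc (n * m) * cs.length w = cs.length (w ^ (n * m)) := (hw (n * m)).symm
      _ = cs.length (v * (u ^ n) ^ m * v⁻¹) := by rw [hw']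
      _ ≤ cs.length (v * (u ^ n) ^ m) + cs.length v⁻¹ := cs.length_mul_le _ _
      _ ≤ cs.length v + cs.length ((u ^ n) ^ m) + cs.length v⁻¹ := by
          have := cs.length_mul_le v ((u ^ n) ^ m); omega
      _ ≤ 2 * cs.length v + m * cs.length (u ^ n) := by
          have := length_pow_le' cs (u ^ n) m
          have := cs.length_inv v
          omega
  rw [h]
  by_contra hne
  have hlt : cs.length (u ^ n) < n * cs.length w := lt_of_le_of_ne hub hne
  set m := 2 * cs.length v + 1 with hm
  have h1 := hlb m
  have h2 : m * (cs.length (u ^ n) + 1) ≤ m * (n * cs.length w) :=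
    Nat.mul_le_mul_left m hlt
  have h3 : (n * m) * cs.length w = m * (n * cs.length w) := by ring
  have h4 : m * (cs.length (u ^ n) + 1) = m * cs.length (u ^ n) + 2 * cs.length v + 1 := by
    rw [hm]; ring
  omega

/-- If `ℓ(v⁻¹wv) = ℓ(w)`, then `w` is straight iff `v⁻¹wv` is straight. -/
theorem straight_iff_conj_straight (cs : CoxeterSystem M W) (v w : W)
    (h : cs.length (v⁻¹ * w * v) = cs.length w) :
    IsStraight cs w ↔ IsStraight cs (v⁻¹ * w * v) := by
  constructor
  · exact straight_conj_aux cs v w h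
  · intro hu
    have hw' : w = (v⁻¹)⁻¹ * (v⁻¹ * w * v) * v⁻¹ := by group
    have h' : cs.length ((v⁻¹)⁻¹ * (v⁻¹ * w * v) * v⁻¹) = cs.length (v⁻¹ * w * v) := by
      rw [← hw', h]
    have := straight_conj_aux cs v⁻¹ (v⁻¹ * w * v) h' hu
    rwa [← hw'] at this
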